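/- Consider the bivariate Elastic net objective L(b) = (1/2)·bᵀ M b − bᵀh + √q·(|b₁|+|b₂|) + (μ/2)·‖b‖², with M = [[1,ρ],[ρ,1]], h₁ > |h₂| ≥ 0, ρ ∈ [0,1), μ ≥ 0, and set η = ρ/(1+μ). If h₂ ≥ η·h₁ and (h₂ − η·h₁)/(1−η) ≤ √q < h₁, then the minimizer is b̂₁ = (h₁−√q)/(1+μ) > 0 and b̂₂ = 0. -/

import Mathlib

/-- Bivariate Elastic-net objective. -/
noncomputable def enObj (ρ μ q h1 h2 b1 b2 : ℝ) : ℝ :=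
  (1 / 2) * (b1 ^ 2 + 2 * ρ * b1 * b2 + b2 ^ 2) - (b1 * h1 + b2 * h2)
    + Real.sqrt q * (|b1| + |b2|) + (μ / 2) * (b1 ^ 2 + b2 ^ 2)

/-- Middle segment of the Elastic-net solution path: with `η = ρ/(1+μ)`, if
`h₂ ≥ η h₁` and `(h₂−ηh₁)/(1−η) ≤ √q < h₁`, the minimizer is
`((h₁−√q)/(1+μ), 0)` with positive first coordinate. -/
theorem stmt_6 (ρ μ q h1 h2 : ℝ) (hρ : ρ ∈ Set.Ico (0 : ℝ) 1) (hμ : 0 ≤ μ)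
    (hh : |h2| < h1)
    (hη : h2 ≥ (ρ / (1 + μ)) * h1)
    (hq1 : (h2 - (ρ / (1 + μ)) * h1) / (1 - ρ / (1 + μ)) ≤ Real.sqrt q)
    (hq2 : Real.sqrt q < h1) :
    0 < (h1 - Real.sqrt q) / (1 + μ) ∧
    ∀ b1 b2 : ℝ,
      enObj ρ μ q h1 h2 ((h1 - Real.sqrt q) / (1 + μ)) 0 ≤ enObj ρ μ q h1 h2 b1 b2 := by
  obtain ⟨hρ0, hρ1⟩ := hρ
  set s := Real.sqrt q with hsdef
  have hs : 0 ≤ s := Real.sqrt_nonneg q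
  have hm : (0:ℝ) < 1 + μ := by linarith
  set β := (h1 - s) / (1 + μ) with hβdef
  have hβ : (1 + μ) * β = h1 - s := by rw [hβdef]; field_simp
  have hβpos : 0 < β := div_pos (by linarith) hm
  have hηlt : ρ / (1 + μ) < 1 := by
    rw [div_lt_one hm]; linarith
  have hden : 0 < 1 - ρ / (1 + μ) := by linarith
  -- key bounds
  have key3 : h2 - ρ * β ≤ s := by
    have h1' : h2 - (ρ / (1 + μ)) * h1 ≤ s * (1 - ρ / (1 + μ)) := by
      have := (div_le_iff₀ hden).mp hq1
      linarith
    have hρβ : ρ * β = (ρ / (1 + μ)) * h1 - (ρ / (1 + μ)) * s := by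
      rw [hβdef]; ring
    have hρs : ρ / (1 + μ) * s ≤ s := by
      nlinarith [mul_nonneg (le_of_lt hden) hs]
    nlinarith
  have key2 : ρ * β ≤ h2 := by
    have hρβ : ρ * β = (ρ / (1 + μ)) * h1 - (ρ / (1 + μ)) * s := by
      rw [hβdef]; ring
    have : 0 ≤ (ρ / (1 + μ)) * s :=
      mul_nonneg (div_nonneg hρ0 hm.le) hs
    linarith
  refine ⟨hβpos, fun b1 b2 => ?_⟩
  have hB : 0 ≤ (ρ * β - h2) * b2 + s * |b2| := by
    rcases le_or_gt 0 b2 with h | h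
    · rw [abs_of_nonneg h]; nlinarith
    · rw [abs_of_neg h]; nlinarith
  have hA : 0 ≤ s * (|b1| - b1) := mul_nonneg hs (by linarith [le_abs_self b1])
  simp only [enObj, abs_zero, abs_of_pos hβpos]
  have h1eq : h1 = (1 + μ) * β + s := by linarith
  nlinarith [mul_nonneg (by linarith : (0:ℝ) ≤ 1 + μ - ρ) (sq_nonneg (b1 - β)),
    mul_nonneg (by linarith : (0:ℝ) ≤ 1 + μ - ρ) (sq_nonneg b2),
    mul_nonneg hρ0 (sq_nonneg (b1 - β + b2)), hA, hB]
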